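/- Let M be a real symmetric matrix indexed by a finite nonempty type and let M⁺ be its stoquastic. Then λ(M⁺) equals the supremum, over all unit vectors ψ with nonnegative components, of ∑_{i≠j} ψᵢ ψⱼ |Mᵢⱼ| + ∑_i ψᵢ² Mᵢᵢ. -/

import Mathlib

open Matrix Finset

/-- The largest eigenvalue of a Hermitian matrix. -/
noncomputable def maxEig {𝕜 : Type*} [RCLike 𝕜] {n : Type*} [Fintype n] [DecidableEq n]
    {A : Matrix n n 𝕜} (hA : A.IsHermitian) : ℝ := ⨆ i, hA.eigenvalues i

/-- The stoquastic of a real matrix: keep the diagonal, take absolute values off-diagonal. -/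
def stoq {n : Type*} [DecidableEq n] (A : Matrix n n ℝ) : Matrix n n ℝ :=
  fun i j => if i = j then A i j else |A i j|

lemma stoq_isHermitian {n : Type*} [Fintype n] [DecidableEq n] {A : Matrix n n ℝ}
    (hA : A.IsHermitian) : (stoq A).IsHermitian := by
  ext i j
  by_cases h : i = j
  · subst h; simp [stoq, Matrix.conjTranspose_apply]
  · have := hA.apply i j
    simp only [Matrix.conjTranspose_apply, stoq, h, Ne.symm h, if_false, star_trivial] at *
    rw [this]

section aux
variable {n : Type*} [Fintype n] [DecidableEq n]

lemma quad_le_maxEig [Nonempty n] {A : Matrix n n ℝ} (hA : A.IsHermitian) (ψ : n → ℝ) :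
    ψ ⬝ᵥ (A *ᵥ ψ) ≤ maxEig hA * (ψ ⬝ᵥ ψ) := by
  set U := (hA.eigenvectorUnitary : Matrix n n ℝ) with hU
  have hstar : star U = Uᵀ := by
    ext i j; simp [Matrix.star_eq_conjTranspose, Matrix.conjTranspose_apply]
  have hUU : U * star U = 1 := (Matrix.mem_unitaryGroup_iff).mp hA.eigenvectorUnitary.2
  set c := ψ ᵥ* U with hc
  have hcv : ∀ x : n → ℝ, ψ ⬝ᵥ (U *ᵥ x) = c ⬝ᵥ x := fun x => dotProduct_mulVec ψ U x
  have hAψ : A *ᵥ ψ = U *ᵥ (diagonal (RCLike.ofReal ∘ hA.eigenvalues) *ᵥ (star U *ᵥ ψ)) := by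
    conv_lhs => rw [hA.spectral_theorem]
    simp [← mulVec_mulVec]
    rfl
  have hcψ : star U *ᵥ ψ = c := by rw [hstar, mulVec_transpose]
  have hcc : c ⬝ᵥ c = ψ ⬝ᵥ ψ := by
    calc c ⬝ᵥ c = ψ ⬝ᵥ (U *ᵥ c) := (hcv c).symm
    _ = ψ ⬝ᵥ ((U * star U) *ᵥ ψ) := by rw [← hcψ, mulVec_mulVec]
    _ = ψ ⬝ᵥ ψ := by rw [hUU, one_mulVec]
  have hbdd : ∀ i, hA.eigenvalues i ≤ maxEig hA := fun i =>
    le_ciSup (Set.Finite.bddAbove (Set.finite_range _)) i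
  calc ψ ⬝ᵥ (A *ᵥ ψ) = c ⬝ᵥ (diagonal (RCLike.ofReal ∘ hA.eigenvalues) *ᵥ c) := by
        rw [hAψ, hcψ, hcv]
  _ = ∑ i, hA.eigenvalues i * (c i * c i) := by
        simp only [dotProduct, mulVec_diagonal, Function.comp_apply, RCLike.ofReal_real_eq_id,
          id_eq]
        exact Finset.sum_congr rfl fun i _ => by ring
  _ ≤ ∑ i, maxEig hA * (c i * c i) := by
        apply Finset.sum_le_sum
        intro i _
        exact mul_le_mul_of_nonneg_right (hbdd i) (mul_self_nonneg _)
  _ = maxEig hA * (ψ ⬝ᵥ ψ) := by rw [← hcc]; simp [dotProduct, Finset.mul_sum]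

end aux

section aux2
variable {n : Type*} [Fintype n] [DecidableEq n]

lemma obj_eq_quad {M : Matrix n n ℝ} (ψ : n → ℝ) :
    (∑ i, ∑ j ∈ Finset.univ \ {i}, ψ i * ψ j * |M i j|) + ∑ i, ψ i ^ 2 * M i i
      = ψ ⬝ᵥ (stoq M *ᵥ ψ) := by
  simp only [dotProduct, mulVec, dotProduct, Finset.mul_sum, ← Finset.sum_add_distrib]
  refine Finset.sum_congr rfl fun i _ => ?_
  conv_rhs => rw [Finset.sum_eq_sum_sdiff_singleton_add (Finset.mem_univ i)
    (fun j => ψ i * (stoq M i j * ψ j))]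
  congr 1
  · refine Finset.sum_congr rfl fun j hj => ?_
    have hij : i ≠ j := by
      rcases Finset.mem_sdiff.mp hj with ⟨-, h⟩
      simp only [Finset.mem_singleton] at h
      exact fun e => h e.symm
    simp only [stoq, hij, if_false]
    ring
  · simp only [stoq, eq_self_iff_true, if_true]
    ring

lemma quad_le_quad_abs {M : Matrix n n ℝ} (v : n → ℝ) :
    v ⬝ᵥ (stoq M *ᵥ v) ≤ (fun i => |v i|) ⬝ᵥ (stoq M *ᵥ fun i => |v i|) := by
  simp only [dotProduct, mulVec, dotProduct, Finset.mul_sum]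
  refine Finset.sum_le_sum fun i _ => Finset.sum_le_sum fun j _ => ?_
  by_cases h : i = j
  · subst h
    simp only [stoq, eq_self_iff_true, if_true]
    have : |v i| * (M i i * |v i|) = M i i * (|v i| * |v i|) := by ring
    rw [this, abs_mul_abs_self]
    exact le_of_eq (by ring)
  · simp only [stoq, h, if_false]
    have h1 : v i * (|M i j| * v j) = |M i j| * (v i * v j) := by ring
    have h2 : |v i| * (|M i j| * |v j|) = |M i j| * (|v i| * |v j|) := by ring
    rw [h1, h2, ← abs_mul]
    exact mul_le_mul_of_nonneg_left (le_abs_self _) (abs_nonneg _)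

end aux2


/-- **Variational (Min-Max) form of the L1 adaptive loss objective.** The largest eigenvalue
of the stoquastic `M⁺` equals the supremum, over nonnegative unit vectors `ψ`, of
`∑_{i≠j} ψᵢ ψⱼ |Mᵢⱼ| + ∑ᵢ ψᵢ² Mᵢᵢ`. -/
theorem maxEig_stoq_eq_iSup_nonneg {n : Type*} [Fintype n] [DecidableEq n] [Nonempty n]
    {M : Matrix n n ℝ} (hM : M.IsHermitian) :
    maxEig (stoq_isHermitian hM) =
      ⨆ ψ : {ψ : n → ℝ // (∑ i, ψ i ^ 2 = 1) ∧ ∀ i, 0 ≤ ψ i},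
        (∑ i, ∑ j ∈ Finset.univ \ {i}, ψ.1 i * ψ.1 j * |M i j|) +
          ∑ i, ψ.1 i ^ 2 * M i i := by
  set hA := stoq_isHermitian hM
  -- every objective value is ≤ maxEig
  have key : ∀ ψ : {ψ : n → ℝ // (∑ i, ψ i ^ 2 = 1) ∧ ∀ i, 0 ≤ ψ i},
      (∑ i, ∑ j ∈ Finset.univ \ {i}, ψ.1 i * ψ.1 j * |M i j|) + ∑ i, ψ.1 i ^ 2 * M i i
        ≤ maxEig hA := by
    rintro ⟨ψ, hψ1, -⟩
    have hdot : ψ ⬝ᵥ ψ = 1 := by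
      simpa [dotProduct, sq] using hψ1
    calc _ = ψ ⬝ᵥ (stoq M *ᵥ ψ) := obj_eq_quad ψ
    _ ≤ maxEig hA * (ψ ⬝ᵥ ψ) := quad_le_maxEig hA ψ
    _ = maxEig hA := by rw [hdot, mul_one]
  -- the maximizing eigenvector
  obtain ⟨i0, hi0⟩ := Finite.exists_max hA.eigenvalues
  have hmax : maxEig hA = hA.eigenvalues i0 :=
    le_antisymm (ciSup_le hi0) (le_ciSup (Set.Finite.bddAbove (Set.finite_range _)) i0)
  set v : n → ℝ := ⇑(hA.eigenvectorBasis i0) with hv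
  have hvnorm : ∑ i, v i ^ 2 = 1 := by
    have h1 : ‖hA.eigenvectorBasis i0‖ = 1 := hA.eigenvectorBasis.orthonormal.1 i0
    have h2 := EuclideanSpace.norm_eq (hA.eigenvectorBasis i0)
    rw [h1] at h2
    have h3 : (0:ℝ) ≤ ∑ i, ‖hA.eigenvectorBasis i0 i‖ ^ 2 :=
      Finset.sum_nonneg fun i _ => sq_nonneg _
    have h4 : ∑ i, ‖hA.eigenvectorBasis i0 i‖ ^ 2 = 1 := by
      nlinarith [Real.sq_sqrt h3]
    simpa [Real.norm_eq_abs, sq_abs] using h4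
  have hvv : v ⬝ᵥ v = 1 := by simpa [dotProduct, sq] using hvnorm
  have hev : stoq M *ᵥ v = hA.eigenvalues i0 • v := hA.mulVec_eigenvectorBasis i0
  have hquad : v ⬝ᵥ (stoq M *ᵥ v) = hA.eigenvalues i0 := by
    rw [hev, dotProduct_smul, hvv, smul_eq_mul, mul_one]
  -- the candidate vector |v|
  have habs : ∑ i, |v i| ^ 2 = 1 := by simpa [sq_abs] using hvnorm
  set ψ₀ : {ψ : n → ℝ // (∑ i, ψ i ^ 2 = 1) ∧ ∀ i, 0 ≤ ψ i} :=
    ⟨fun i => |v i|, habs, fun i => abs_nonneg _⟩ with hψ₀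
  haveI : Nonempty {ψ : n → ℝ // (∑ i, ψ i ^ 2 = 1) ∧ ∀ i, 0 ≤ ψ i} := ⟨ψ₀⟩
  refine le_antisymm ?_ (ciSup_le key)
  have hle : maxEig hA ≤ (∑ i, ∑ j ∈ Finset.univ \ {i}, ψ₀.1 i * ψ₀.1 j * |M i j|) +
      ∑ i, ψ₀.1 i ^ 2 * M i i := by
    rw [hmax, ← hquad, obj_eq_quad]
    exact quad_le_quad_abs v
  exact hle.trans (le_ciSup ⟨maxEig hA, Set.forall_mem_range.mpr key⟩ ψ₀)
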